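/- Let d ≥ 2 be an integer and let (A_1,B_1), …, (A_d,B_d) be i.i.d. copies of a pair (A,B) of bounded real random variables. Set m = max{E[A²], E[B²]}. Then E[(∏_{i=1}^d A_i − ∏_{i=1}^d B_i)²] ≤ d²·m^{d−2}·(E[A²] − E[B²])² + 2d·m^{d−1}·E[(A−B)²]. -/

import Mathlib

open MeasureTheory ProbabilityTheory Finset

private lemma pow_sub_pow_le' (n : ℕ) {x y : ℝ} (hy : |y| ≤ x) :
    x ^ n - y ^ n ≤ (n : ℝ) * x ^ (n - 1) * (x - y) := by
  have hx : 0 ≤ x := (abs_nonneg y).trans hy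
  have hyx : y ≤ x := (le_abs_self y).trans hy
  rw [← geom_sum₂_mul]
  have hsum : (∑ i ∈ range n, x ^ i * y ^ (n - 1 - i)) ≤ (n : ℝ) * x ^ (n - 1) := by
    calc (∑ i ∈ range n, x ^ i * y ^ (n - 1 - i))
        ≤ ∑ i ∈ range n, x ^ (n - 1) := by
          apply Finset.sum_le_sum
          intro i hi
          have hi' : i < n := Finset.mem_range.mp hi
          calc x ^ i * y ^ (n - 1 - i) ≤ |x ^ i * y ^ (n - 1 - i)| := le_abs_self _
            _ = x ^ i * |y| ^ (n - 1 - i) := by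
                rw [abs_mul, abs_pow, abs_pow, abs_of_nonneg hx]
            _ ≤ x ^ i * x ^ (n - 1 - i) := by
                exact mul_le_mul_of_nonneg_left (pow_le_pow_left₀ (abs_nonneg y) hy _)
                  (pow_nonneg hx _)
            _ = x ^ (n - 1) := by
                rw [← pow_add]; congr 1; omega
      _ = (n : ℝ) * x ^ (n - 1) := by simp [mul_comm]
  exact mul_le_mul_of_nonneg_right hsum (by linarith)

private lemma le_pow_sub_pow' (n : ℕ) {x y : ℝ} (hy : 0 ≤ y) (hyx : y ≤ x) :
    (n : ℝ) * y ^ (n - 1) * (x - y) ≤ x ^ n - y ^ n := by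
  rw [← geom_sum₂_mul]
  apply mul_le_mul_of_nonneg_right _ (by linarith)
  calc (n : ℝ) * y ^ (n - 1) = ∑ _i ∈ range n, y ^ (n - 1) := by simp [mul_comm]
    _ ≤ ∑ i ∈ range n, x ^ i * y ^ (n - 1 - i) := by
        apply Finset.sum_le_sum
        intro i hi
        have hi' : i < n := Finset.mem_range.mp hi
        calc y ^ (n - 1) = y ^ i * y ^ (n - 1 - i) := by rw [← pow_add]; congr 1; omega
          _ ≤ x ^ i * y ^ (n - 1 - i) := by
              exact mul_le_mul_of_nonneg_right (pow_le_pow_left₀ hy hyx _) (pow_nonneg hy _)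

private lemma key_ineq (d : ℕ) (hd : 2 ≤ d) (a b c : ℝ) (ha : 0 ≤ a) (hb : 0 ≤ b)
    (h1 : 0 ≤ a + b - 2 * c) (h2 : 0 ≤ a + b + 2 * c) :
    a ^ d + b ^ d - 2 * c ^ d
      ≤ (d : ℝ) ^ 2 * (max a b) ^ (d - 2) * (a - b) ^ 2
        + 2 * d * (max a b) ^ (d - 1) * (a + b - 2 * c) := by
  wlog hba : b ≤ a with H
  · have := H d hd b a c hb ha (by linarith) (by linarith) (le_of_not_ge hba)
    have hmax : max b a = max a b := max_comm b a
    calc a ^ d + b ^ d - 2 * c ^ d = b ^ d + a ^ d - 2 * c ^ d := by ring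
      _ ≤ (d : ℝ) ^ 2 * (max b a) ^ (d - 2) * (b - a) ^ 2
          + 2 * d * (max b a) ^ (d - 1) * (b + a - 2 * c) := this
      _ = (d : ℝ) ^ 2 * (max a b) ^ (d - 2) * (a - b) ^ 2
          + 2 * d * (max a b) ^ (d - 1) * (a + b - 2 * c) := by rw [hmax]; ring
  rw [max_eq_left hba]
  have hD : (2:ℝ) ≤ (d:ℝ) := by exact_mod_cast hd
  set D : ℝ := (d : ℝ) with hDdef
  have hc : |c| ≤ a := abs_le.mpr ⟨by linarith, by linarith⟩
  have hab : |b| ≤ a := by rw [abs_of_nonneg hb]; exact hba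
  have e1 : a ^ d - c ^ d ≤ D * a ^ (d - 1) * (a - c) := pow_sub_pow_le' d hc
  have e2 : D * b ^ (d - 1) * (a - b) ≤ a ^ d - b ^ d := le_pow_sub_pow' d hb hba
  have e3 : a ^ (d - 1) - b ^ (d - 1) ≤ (D - 1) * a ^ (d - 2) * (a - b) := by
    have := pow_sub_pow_le' (d - 1) hab
    have hcast : ((d - 1 : ℕ) : ℝ) = D - 1 := by
      rw [hDdef]; push_cast [Nat.cast_sub (by omega : 1 ≤ d)]; ring
    have hsub : d - 1 - 1 = d - 2 := by omega
    rwa [hcast, hsub] at this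
  have hr : (0:ℝ) ≤ a ^ (d - 2) := pow_nonneg ha _
  have hp : (0:ℝ) ≤ a ^ (d - 1) := pow_nonneg ha _
  have hq : (0:ℝ) ≤ b ^ (d - 1) := pow_nonneg hb _
  have hD0 : (0:ℝ) ≤ D := by linarith
  calc a ^ d + b ^ d - 2 * c ^ d
      ≤ 2 * (D * a ^ (d - 1) * (a - c)) - D * b ^ (d - 1) * (a - b) := by linarith
    _ = D * (a - b) * (a ^ (d - 1) - b ^ (d - 1)) + D * a ^ (d - 1) * (a + b - 2 * c) := by ring
    _ ≤ D * (a - b) * ((D - 1) * a ^ (d - 2) * (a - b))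
        + 2 * D * a ^ (d - 1) * (a + b - 2 * c) := by
        have t1 := mul_le_mul_of_nonneg_left e3 (mul_nonneg hD0 (by linarith : (0:ℝ) ≤ a - b))
        have t2 : 0 ≤ D * a ^ (d - 1) * (a + b - 2 * c) := by positivity
        linarith
    _ ≤ D ^ 2 * a ^ (d - 2) * (a - b) ^ 2 + 2 * D * a ^ (d - 1) * (a + b - 2 * c) := by
        nlinarith [mul_nonneg (mul_nonneg hD0 hr) (sq_nonneg (a - b))]

private lemma integral_finset_prod_of_iIndep {Ω ι : Type*} [MeasurableSpace Ω] {μ : Measure Ω}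
    [IsProbabilityMeasure μ] {X : ι → Ω → ℝ} (hm : ∀ i, Measurable (X i))
    (hindep : iIndepFun X μ) (s : Finset ι) :
    ∫ ω, ∏ i ∈ s, X i ω ∂μ = ∏ i ∈ s, ∫ ω, X i ω ∂μ := by
  classical
  induction s using Finset.induction_on with
  | empty => simp
  | @insert j s hj ih =>
    have hIndep : IndepFun (∏ i ∈ s, X i) (X j) μ :=
      hindep.indepFun_finsetProd_of_notMem hm hj
    have hpm : AEStronglyMeasurable (∏ i ∈ s, X i) μ := by
      have := (Finset.measurable_prod s fun i _ => hm i).aestronglyMeasurable (μ := μ)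
      simpa [funext fun ω => (Finset.prod_apply ω s X).symm] using this
    have hmul := hIndep.integral_mul_eq_mul_integral hpm (hm j).aestronglyMeasurable
    have hfun : (∏ i ∈ s, X i) * X j = fun ω => ∏ i ∈ insert j s, X i ω := by
      funext ω
      simp [Finset.prod_insert hj, Finset.prod_apply, mul_comm]
    rw [hfun] at hmul
    have hps : (∏ i ∈ s, X i) = fun ω => ∏ i ∈ s, X i ω :=
      funext fun ω => Finset.prod_apply ω s X
    rw [hmul, hps, ih, Finset.prod_insert hj, mul_comm]

private lemma integrable_of_abs_bound {Ω : Type*} [MeasurableSpace Ω] {μ : Measure Ω}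
    [IsProbabilityMeasure μ] {f : Ω → ℝ} (hf : Measurable f) {C : ℝ}
    (h : ∀ ω, |f ω| ≤ C) : Integrable f μ :=
  (integrable_const C).mono' hf.aestronglyMeasurable
    (Filter.Eventually.of_forall fun ω => by simpa [Real.norm_eq_abs] using h ω)

private lemma integral_sq_sub {Ω : Type*} [MeasurableSpace Ω] {μ : Measure Ω}
    [IsProbabilityMeasure μ] {A B : Ω → ℝ} (hA : Measurable A) (hB : Measurable B)
    {M : ℝ} (hM : 0 ≤ M) (hbA : ∀ ω, |A ω| ≤ M) (hbB : ∀ ω, |B ω| ≤ M) :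
    ∫ ω, (A ω - B ω)^2 ∂μ
      = (∫ ω, (A ω)^2 ∂μ) + (∫ ω, (B ω)^2 ∂μ) - 2 * ∫ ω, A ω * B ω ∂μ := by
  have hA2 : Integrable (fun ω => (A ω)^2) μ :=
    integrable_of_abs_bound (hA.pow_const 2) (C := M^2) (fun ω => by
      rw [abs_pow]; exact pow_le_pow_left₀ (abs_nonneg _) (hbA ω) 2)
  have hB2 : Integrable (fun ω => (B ω)^2) μ :=
    integrable_of_abs_bound (hB.pow_const 2) (C := M^2) (fun ω => by
      rw [abs_pow]; exact pow_le_pow_left₀ (abs_nonneg _) (hbB ω) 2)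
  have hAB : Integrable (fun ω => A ω * B ω) μ :=
    integrable_of_abs_bound (hA.mul hB) (C := M^2) (fun ω => by
      rw [abs_mul, sq]
      exact mul_le_mul (hbA ω) (hbB ω) (abs_nonneg _) hM)
  have hexp : ∀ ω, (A ω - B ω)^2 = ((A ω)^2 + (B ω)^2) - 2 * (A ω * B ω) := fun ω => by ring
  simp_rw [hexp]
  have hsum : Integrable (fun ω => A ω ^ 2 + B ω ^ 2) μ := hA2.add hB2
  have h2 : Integrable (fun ω => 2 * (A ω * B ω)) μ := hAB.const_mul 2
  rw [integral_sub hsum h2, integral_add hA2 hB2, MeasureTheory.integral_const_mul]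

private lemma integral_sq_add {Ω : Type*} [MeasurableSpace Ω] {μ : Measure Ω}
    [IsProbabilityMeasure μ] {A B : Ω → ℝ} (hA : Measurable A) (hB : Measurable B)
    {M : ℝ} (hM : 0 ≤ M) (hbA : ∀ ω, |A ω| ≤ M) (hbB : ∀ ω, |B ω| ≤ M) :
    ∫ ω, (A ω + B ω)^2 ∂μ
      = (∫ ω, (A ω)^2 ∂μ) + (∫ ω, (B ω)^2 ∂μ) + 2 * ∫ ω, A ω * B ω ∂μ := by
  have h := integral_sq_sub (μ := μ) hA (hB.neg) hM hbA (fun ω => by simpa using hbB ω)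
  have e1 : ∀ ω, (A ω - (-B ω)) = A ω + B ω := fun ω => by ring
  have e2 : ∀ ω, ((-B ω))^2 = (B ω)^2 := fun ω => by ring
  have e3 : ∀ ω, A ω * (-B ω) = -(A ω * B ω) := fun ω => by ring
  simp_rw [Pi.neg_apply, e1, e2, e3, integral_neg] at h
  linarith

theorem sq_diff_of_products_bound :
    ∀ (d : ℕ), 2 ≤ d →
    ∀ (Ω : Type) (_ : MeasurableSpace Ω) (μ : Measure Ω), IsProbabilityMeasure μ →
    ∀ (A B : Ω → ℝ) (A' B' : Fin d → Ω → ℝ),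
    Measurable A → Measurable B →
    (∀ i, Measurable (A' i)) → (∀ i, Measurable (B' i)) →
    -- boundedness
    (∃ M : ℝ, (∀ ω, |A ω| ≤ M ∧ |B ω| ≤ M) ∧ ∀ i ω, |A' i ω| ≤ M ∧ |B' i ω| ≤ M) →
    -- the pairs (A'_i, B'_i) are jointly independent ...
    iIndepFun
      (fun i ω => ((A' i ω, B' i ω) : ℝ × ℝ)) μ →
    -- ... and each is a copy of the pair (A, B)
    (∀ i, μ.map (fun ω => ((A' i ω, B' i ω) : ℝ × ℝ))
        = μ.map (fun ω => ((A ω, B ω) : ℝ × ℝ))) →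
    ∫ ω, ((∏ i, A' i ω) - (∏ i, B' i ω))^2 ∂μ
      ≤ (d:ℝ)^2 * (max (∫ ω, (A ω)^2 ∂μ) (∫ ω, (B ω)^2 ∂μ))^(d-2)
          * ((∫ ω, (A ω)^2 ∂μ) - (∫ ω, (B ω)^2 ∂μ))^2
        + 2 * d * (max (∫ ω, (A ω)^2 ∂μ) (∫ ω, (B ω)^2 ∂μ))^(d-1)
          * ∫ ω, (A ω - B ω)^2 ∂μ := by
  intro d hd Ω mΩ μ hμ A B A' B' hA hB hA' hB' hbdd hindep hcopy
  obtain ⟨M₀, hbd, hbd'⟩ := hbdd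
  set M : ℝ := max M₀ 0 with hMdef
  have hM : 0 ≤ M := le_max_right _ _
  have hbA : ∀ ω, |A ω| ≤ M := fun ω => le_trans (hbd ω).1 (le_max_left _ _)
  have hbB : ∀ ω, |B ω| ≤ M := fun ω => le_trans (hbd ω).2 (le_max_left _ _)
  have hbA' : ∀ i ω, |A' i ω| ≤ M := fun i ω => le_trans (hbd' i ω).1 (le_max_left _ _)
  have hbB' : ∀ i ω, |B' i ω| ≤ M := fun i ω => le_trans (hbd' i ω).2 (le_max_left _ _)
  -- transfer of integrals along the identical-distribution hypothesis
  have transfer : ∀ (g : ℝ × ℝ → ℝ), Measurable g → ∀ i,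
      ∫ ω, g (A' i ω, B' i ω) ∂μ = ∫ ω, g (A ω, B ω) ∂μ := by
    intro g hg i
    have h1 : ∫ ω, g (A' i ω, B' i ω) ∂μ
        = ∫ p, g p ∂(μ.map fun ω => ((A' i ω, B' i ω) : ℝ × ℝ)) :=
      (integral_map ((hA' i).prodMk (hB' i)).aemeasurable hg.aestronglyMeasurable).symm
    rw [h1, hcopy i, integral_map (hA.prodMk hB).aemeasurable hg.aestronglyMeasurable]
  have tA : ∀ i, ∫ ω, (A' i ω)^2 ∂μ = ∫ ω, (A ω)^2 ∂μ := fun i => by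
    simpa using transfer (fun p => p.1^2) (measurable_fst.pow_const 2) i
  have tB : ∀ i, ∫ ω, (B' i ω)^2 ∂μ = ∫ ω, (B ω)^2 ∂μ := fun i => by
    simpa using transfer (fun p => p.2^2) (measurable_snd.pow_const 2) i
  have tAB : ∀ i, ∫ ω, A' i ω * B' i ω ∂μ = ∫ ω, A ω * B ω ∂μ := fun i => by
    simpa using transfer (fun p => p.1 * p.2) (measurable_fst.mul measurable_snd) i
  -- independence of derived families
  have hiA : iIndepFun (fun i ω => (A' i ω)^2) μ := by
    have := hindep.comp (fun _ (p : ℝ × ℝ) => p.1^2) (fun _ => measurable_fst.pow_const 2)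
    simpa [Function.comp_def] using this
  have hiB : iIndepFun (fun i ω => (B' i ω)^2) μ := by
    have := hindep.comp (fun _ (p : ℝ × ℝ) => p.2^2) (fun _ => measurable_snd.pow_const 2)
    simpa [Function.comp_def] using this
  have hiAB : iIndepFun (fun i ω => A' i ω * B' i ω) μ := by
    have := hindep.comp (fun _ (p : ℝ × ℝ) => p.1 * p.2)
      (fun _ => measurable_fst.mul measurable_snd)
    simpa [Function.comp_def] using this
  -- the three product formulas
  have eqA : ∫ ω, (∏ i, A' i ω)^2 ∂μ = (∫ ω, (A ω)^2 ∂μ)^d := by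
    have h0 : ∀ ω, (∏ i, A' i ω)^2 = ∏ i, (A' i ω)^2 := fun ω =>
      (Finset.prod_pow _ _ _).symm
    simp_rw [h0]
    rw [integral_finset_prod_of_iIndep (fun i => (hA' i).pow_const 2) hiA]
    rw [Finset.prod_congr rfl fun i _ => tA i, Finset.prod_const, Finset.card_univ,
      Fintype.card_fin]
  have eqB : ∫ ω, (∏ i, B' i ω)^2 ∂μ = (∫ ω, (B ω)^2 ∂μ)^d := by
    have h0 : ∀ ω, (∏ i, B' i ω)^2 = ∏ i, (B' i ω)^2 := fun ω =>
      (Finset.prod_pow _ _ _).symm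
    simp_rw [h0]
    rw [integral_finset_prod_of_iIndep (fun i => (hB' i).pow_const 2) hiB]
    rw [Finset.prod_congr rfl fun i _ => tB i, Finset.prod_const, Finset.card_univ,
      Fintype.card_fin]
  have eqAB : ∫ ω, (∏ i, A' i ω) * (∏ i, B' i ω) ∂μ = (∫ ω, A ω * B ω ∂μ)^d := by
    have h0 : ∀ ω, (∏ i, A' i ω) * (∏ i, B' i ω) = ∏ i, (A' i ω * B' i ω) := fun ω =>
      (Finset.prod_mul_distrib).symm
    simp_rw [h0]
    rw [integral_finset_prod_of_iIndep (X := fun i ω => A' i ω * B' i ω) (fun i => (hA' i).mul (hB' i)) hiAB]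
    rw [Finset.prod_congr rfl fun i _ => tAB i, Finset.prod_const, Finset.card_univ,
      Fintype.card_fin]
  -- measurability and bounds for the products
  have hP : Measurable (fun ω => ∏ i, A' i ω) := Finset.measurable_prod _ fun i _ => hA' i
  have hQ : Measurable (fun ω => ∏ i, B' i ω) := Finset.measurable_prod _ fun i _ => hB' i
  have hbP : ∀ ω, |∏ i, A' i ω| ≤ M ^ d := fun ω => by
    calc |∏ i, A' i ω| = ∏ i, |A' i ω| := Finset.abs_prod _ _
      _ ≤ ∏ _i : Fin d, M := Finset.prod_le_prod (fun i _ => abs_nonneg _)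
          (fun i _ => hbA' i ω)
      _ = M ^ d := by simp
  have hbQ : ∀ ω, |∏ i, B' i ω| ≤ M ^ d := fun ω => by
    calc |∏ i, B' i ω| = ∏ i, |B' i ω| := Finset.abs_prod _ _
      _ ≤ ∏ _i : Fin d, M := Finset.prod_le_prod (fun i _ => abs_nonneg _)
          (fun i _ => hbB' i ω)
      _ = M ^ d := by simp
  -- expand the three squares
  have hexpP := integral_sq_sub (μ := μ) hP hQ (pow_nonneg hM d) hbP hbQ
  have hexpAB := integral_sq_sub (μ := μ) hA hB hM hbA hbB
  have hexpABp := integral_sq_add (μ := μ) hA hB hM hbA hbB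
  -- nonnegativity facts
  have ha : 0 ≤ ∫ ω, (A ω)^2 ∂μ := integral_nonneg fun ω => sq_nonneg _
  have hb : 0 ≤ ∫ ω, (B ω)^2 ∂μ := integral_nonneg fun ω => sq_nonneg _
  have h1 : 0 ≤ (∫ ω, (A ω)^2 ∂μ) + (∫ ω, (B ω)^2 ∂μ) - 2 * ∫ ω, A ω * B ω ∂μ := by
    rw [← hexpAB]; exact integral_nonneg fun ω => sq_nonneg _
  have h2 : 0 ≤ (∫ ω, (A ω)^2 ∂μ) + (∫ ω, (B ω)^2 ∂μ) + 2 * ∫ ω, A ω * B ω ∂μ := by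
    rw [← hexpABp]; exact integral_nonneg fun ω => sq_nonneg _
  have key := key_ineq d hd (∫ ω, (A ω)^2 ∂μ) (∫ ω, (B ω)^2 ∂μ) (∫ ω, A ω * B ω ∂μ)
    ha hb h1 h2
  rw [hexpP, eqA, eqB, eqAB, hexpAB]
  linarith
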